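/- Let H = span{e_n : n ∈ ℕ} with (e_n) orthonormal. The linear map T : H → H defined by T e_n := e_n + n e_1 is bijective, but T is not weakly adjointable: there is no vector z in the Hilbert space completion of H with ⟨z, e_n⟩ = ⟨e_1, T e_n⟩ for all n. -/

import Mathlib

open scoped InnerProductSpace

/-- On the pre-Hilbert space `H = span{e_n : n ≥ 1}` with orthonormal
Hamel basis `(e_n)`, the linear map `T` with `T e_n = e_n + n e_1` is bijective, but `T`
is not weakly adjointable: in the Hilbert space completion `Hb` of `H` (embedded via the
dense isometry `ι`) there is no vector `z` with `⟪z, e_n⟫ = ⟪e_1, T e_n⟫` for all `n`. -/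
theorem bijective_not_weakly_adjointable {H : Type*} [NormedAddCommGroup H]
    [InnerProductSpace ℂ H] (e : ℕ+ → H) (he : Orthonormal ℂ e)
    (hspan : Submodule.span ℂ (Set.range e) = ⊤)
    (T : H →ₗ[ℂ] H) (hT : ∀ n : ℕ+, T (e n) = e n + (n : ℂ) • e 1)
    {Hb : Type*} [NormedAddCommGroup Hb] [InnerProductSpace ℂ Hb] [CompleteSpace Hb]
    (ι : H →ₗᵢ[ℂ] Hb) (hdense : DenseRange ι) :
    Function.Bijective T ∧
      ¬ ∃ z : Hb, ∀ n : ℕ+, ⟪z, ι (e n)⟫_ℂ = ⟪ι (e 1), ι (T (e n))⟫_ℂ := by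
  constructor
  · -- bijectivity via explicit inverse
    let b : Module.Basis ℕ+ ℂ H := Module.Basis.mk he.linearIndependent (by rw [hspan])
    have hb : ∀ n, b n = e n := fun n => Module.Basis.mk_apply _ _ n
    let S : H →ₗ[ℂ] H := b.constr ℂ (fun n => e n - ((n : ℂ)/2) • e 1)
    have hS : ∀ n : ℕ+, S (e n) = e n - ((n : ℂ)/2) • e 1 := by
      intro n
      have := b.constr_basis ℂ (fun n => e n - ((n : ℂ)/2) • e 1) n
      rwa [hb] at this
    have h1 : S ∘ₗ T = LinearMap.id := by
      apply b.ext
      intro n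
      simp only [LinearMap.comp_apply, LinearMap.id_apply, hb, hT n, map_add, map_smul,
        hS, PNat.one_coe, Nat.cast_one]
      ring_nf
      module
    have h2 : T ∘ₗ S = LinearMap.id := by
      apply b.ext
      intro n
      simp only [LinearMap.comp_apply, LinearMap.id_apply, hb, hS, map_sub, map_smul,
        hT, PNat.one_coe, Nat.cast_one]
      module
    exact ⟨Function.LeftInverse.injective (g := S) fun x => congrArg (· x) h1,
      Function.RightInverse.surjective (g := S) fun x => congrArg (· x) h2⟩
  · rintro ⟨z, hz⟩
    obtain ⟨m, hm⟩ := exists_nat_gt ‖z‖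
    set n : ℕ+ := ⟨m + 2, by omega⟩
    have hn1 : n ≠ 1 := by
      intro h
      have := congrArg PNat.val h
      simp [n] at this
    have key : ⟪z, ι (e n)⟫_ℂ = (n : ℂ) := by
      rw [hz n, ι.inner_map_map, hT n, inner_add_right, inner_smul_right,
        he.2 (fun h => hn1 h.symm)]
      have h11 : ⟪e 1, e 1⟫_ℂ = 1 := by
        rw [inner_self_eq_norm_sq_to_K, he.1 1]
        norm_num
      rw [h11]
      ring
    have hle : ‖⟪z, ι (e n)⟫_ℂ‖ ≤ ‖z‖ * ‖ι (e n)‖ := norm_inner_le_norm _ _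
    rw [key] at hle
    have hnorm : ‖ι (e n)‖ = 1 := by rw [ι.norm_map, he.1 n]
    rw [hnorm, mul_one] at hle
    have : ((m : ℝ) + 2) ≤ ‖z‖ := by
      have : ‖(n : ℂ)‖ = (m : ℝ) + 2 := by
        have : ((n : ℕ) : ℂ) = ((m + 2 : ℕ) : ℂ) := by norm_cast
        rw [this, Complex.norm_natCast]
        push_cast
        ring
      rwa [this] at hle
    linarith
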